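/- Let X be a nonnegative random variable with CDF F (the Gamma(μ₀+1, scale φ₀) CDF) and let Y be an independent exponentially distributed random variable with mean Ω_I > 0. For j = 1,…,k define the random SINR γ_{k→j} = λ_q² X² ρ a_j / (X² ρ ϑ_j + d_sr^α d_k^α (λ_q² + ε ρ Y)). Then the outage probability of user k, namely 1 − P(γ_{k→j} > γ_thj for all j = 1,…,k), equals ∫₀^∞ e^{−z} · F(√(φ* · d_sr^α d_k^α (λ_q² + ε ρ Ω_I z))) dz, where φ_j = γ_thj/(ρ (λ_q² a_j − γ_thj ϑ_j)) and φ* = max_{1≤j≤k} φ_j. -/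

import Mathlib

open MeasureTheory ProbabilityTheory Topology Filter

/-- Lower incomplete gamma function `γ(s, x) = ∫₀ˣ t^{s-1} e^{-t} dt`. -/
noncomputable def lowerGamma (s x : ℝ) : ℝ := ∫ t in (0:ℝ)..x, t ^ (s - 1) * Real.exp (-t)

/-- `μ₀ = ((M+1)π² − 16)/(16 − π²)`. -/
noncomputable def mu0 (M : ℕ) : ℝ := (((M : ℝ) + 1) * Real.pi ^ 2 - 16) / (16 - Real.pi ^ 2)

/-- `φ₀ = (16 − π²)/(4π)`. -/
noncomputable def phi0 : ℝ := (16 - Real.pi ^ 2) / (4 * Real.pi)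

/-- The CDF of the Gamma distribution with shape `μ₀+1` and scale `φ₀`:
`F(x) = γ(μ₀+1, x/φ₀)/Γ(μ₀+1)`. -/
noncomputable def F (M : ℕ) (x : ℝ) : ℝ :=
  lowerGamma (mu0 M + 1) (x / phi0) / Real.Gamma (mu0 M + 1)

lemma pisq_lt_16 : Real.pi ^ 2 < 16 := by
  nlinarith [Real.pi_lt_d2, Real.pi_pos]

lemma mu0_pos {M : ℕ} (hM : 0 < M) : 0 < mu0 M := by
  have hM1 : (1:ℝ) ≤ (M:ℝ) := by exact_mod_cast hM
  have h16 : (0:ℝ) < 16 - Real.pi ^ 2 := by linarith [pisq_lt_16]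
  have hnum : (0:ℝ) < ((M:ℝ) + 1) * Real.pi ^ 2 - 16 := by
    nlinarith [Real.pi_gt_three]
  exact div_pos hnum h16

lemma phi0_pos : 0 < phi0 := by
  have h16 : (0:ℝ) < 16 - Real.pi ^ 2 := by linarith [pisq_lt_16]
  exact div_pos h16 (by linarith [Real.pi_pos])

lemma F_continuous {M : ℕ} (hM : 0 < M) : Continuous (F M) := by
  have hmu := mu0_pos hM
  have hfc : Continuous (fun t : ℝ => t ^ (mu0 M + 1 - 1) * Real.exp (-t)) := by
    have h1 : Continuous (fun t : ℝ => t ^ (mu0 M + 1 - 1)) :=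
      continuous_iff_continuousAt.mpr fun x =>
        Real.continuousAt_rpow_const x _ (Or.inr (by linarith))
    exact h1.mul (Real.continuous_exp.comp continuous_neg)
  have h1 : Continuous (lowerGamma (mu0 M + 1)) :=
    intervalIntegral.continuous_primitive (fun a b => hfc.intervalIntegrable a b) 0
  unfold F
  exact (h1.comp (continuous_id.div_const _)).div_const _

lemma F_nonneg {M : ℕ} (hM : 0 < M) {x : ℝ} (hx : 0 ≤ x) : 0 ≤ F M x := by
  have hmu := mu0_pos hM
  apply div_nonneg
  · apply intervalIntegral.integral_nonneg (div_nonneg hx phi0_pos.le)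
    intro t ht
    exact mul_nonneg (Real.rpow_nonneg ht.1 _) (Real.exp_pos _).le
  · exact (Real.Gamma_pos_of_pos (by linarith)).le

/-- The key pointwise equivalence between the SINR conditions and a single
condition on `x`. -/
lemma key_iff (k : ℕ) (hk : 1 ≤ k) (lamq rho eps D : ℝ) (a th gth : ℕ → ℝ)
    (hlam0 : 0 < lamq) (hrho : 0 < rho) (heps : 0 < eps) (hD : 0 < D)
    (hth : ∀ j ∈ Finset.Icc 1 k, 0 < th j)
    (hgth : ∀ j ∈ Finset.Icc 1 k, 0 < gth j)
    (hcond : ∀ j ∈ Finset.Icc 1 k, gth j * th j < lamq ^ 2 * a j)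
    (x y : ℝ) (hx : 0 ≤ x) (hy : 0 ≤ y) :
    (∀ j ∈ Finset.Icc 1 k, gth j < lamq ^ 2 * x ^ 2 * rho * a j /
        (x ^ 2 * rho * th j + D * (lamq ^ 2 + eps * rho * y)))
      ↔ Real.sqrt ((Finset.Icc 1 k).sup' (Finset.nonempty_Icc.mpr hk)
          (fun j => gth j / (rho * (lamq ^ 2 * a j - gth j * th j)))
          * (D * (lamq ^ 2 + eps * rho * y))) < x := by
  have hc : 0 < D * (lamq ^ 2 + eps * rho * y) := by
    apply mul_pos hD
    have h1 : 0 < lamq ^ 2 := pow_pos hlam0 2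
    have h2 : 0 ≤ eps * rho * y := mul_nonneg (mul_nonneg heps.le hrho.le) hy
    linarith
  have hφspos : 0 < (Finset.Icc 1 k).sup' (Finset.nonempty_Icc.mpr hk)
      (fun j => gth j / (rho * (lamq ^ 2 * a j - gth j * th j))) := by
    rw [Finset.lt_sup'_iff]
    refine ⟨1, Finset.mem_Icc.mpr ⟨le_refl 1, hk⟩, ?_⟩
    have h1 : (1:ℕ) ∈ Finset.Icc 1 k := Finset.mem_Icc.mpr ⟨le_refl 1, hk⟩
    exact div_pos (hgth 1 h1) (mul_pos hrho (by linarith [hcond 1 h1]))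
  have step1 : ∀ j ∈ Finset.Icc 1 k,
      (gth j < lamq ^ 2 * x ^ 2 * rho * a j /
          (x ^ 2 * rho * th j + D * (lamq ^ 2 + eps * rho * y))
        ↔ gth j / (rho * (lamq ^ 2 * a j - gth j * th j))
            < x ^ 2 / (D * (lamq ^ 2 + eps * rho * y))) := by
    intro j hj
    have hq : 0 < rho * (lamq ^ 2 * a j - gth j * th j) :=
      mul_pos hrho (by linarith [hcond j hj])
    have hd : 0 < x ^ 2 * rho * th j + D * (lamq ^ 2 + eps * rho * y) := by
      have : 0 ≤ x ^ 2 * rho * th j :=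
        mul_nonneg (mul_nonneg (sq_nonneg x) hrho.le) (hth j hj).le
      linarith
    rw [lt_div_iff₀ hd, div_lt_div_iff₀ hq hc]
    constructor <;> intro h <;> nlinarith [h]
  have step2 : (∀ j ∈ Finset.Icc 1 k, gth j < lamq ^ 2 * x ^ 2 * rho * a j /
        (x ^ 2 * rho * th j + D * (lamq ^ 2 + eps * rho * y)))
      ↔ (Finset.Icc 1 k).sup' (Finset.nonempty_Icc.mpr hk)
          (fun j => gth j / (rho * (lamq ^ 2 * a j - gth j * th j)))
          * (D * (lamq ^ 2 + eps * rho * y)) < x ^ 2 := by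
    rw [← lt_div_iff₀ hc, Finset.sup'_lt_iff]
    exact forall₂_congr step1
  rw [step2]
  constructor
  · intro h
    have hx0 : 0 < x := by nlinarith [mul_pos hφspos hc]
    exact (Real.sqrt_lt' hx0).mpr h
  · intro h
    have hx0 : 0 < x := lt_of_le_of_lt (Real.sqrt_nonneg _) h
    exact (Real.sqrt_lt' hx0).mp h

set_option maxHeartbeats 1000000 in
/-- **Theorem 2 (PRIS-NOMA, ipSIC)**: the outage probability of user `k` equals
`∫₀^∞ e^{−z} F(√(φ* d_sr^α d_k^α (λ_q² + ε ρ Ω_I z))) dz`. -/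
theorem outage_probability_PRIS_NOMA_ipSIC
    {Ω : Type*} [MeasurableSpace Ω] (Pm : Measure Ω) [IsProbabilityMeasure Pm]
    (M : ℕ) (hM : 0 < M)
    (X Y : Ω → ℝ) (hXm : Measurable X) (hYm : Measurable Y)
    (hXnn : ∀ ω, 0 ≤ X ω) (hYnn : ∀ ω, 0 ≤ Y ω)
    -- X has the Gamma(μ₀+1, scale φ₀) CDF F
    (hXcdf : ∀ x : ℝ, 0 ≤ x → (Pm {ω | X ω ≤ x}).toReal = F M x)
    -- Y is exponentially distributed with mean Ω_I
    (ΩI : ℝ) (hΩI : 0 < ΩI)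
    (hYcdf : ∀ y : ℝ, 0 ≤ y → (Pm {ω | Y ω ≤ y}).toReal = 1 - Real.exp (-(y / ΩI)))
    (hindep : IndepFun X Y Pm)
    (k : ℕ) (hk : 1 ≤ k)
    (lamq rho alpha dsr dk eps : ℝ)
    (a th gth : ℕ → ℝ)
    (hlam0 : 0 < lamq) (hlam1 : lamq ≤ 1) (hrho : 0 < rho)
    (halpha : 0 < alpha) (hdsr : 0 < dsr) (hdk : 0 < dk)
    (heps0 : 0 < eps) (heps1 : eps ≤ 1)
    (ha : ∀ j ∈ Finset.Icc 1 k, 0 < a j)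
    (hth : ∀ j ∈ Finset.Icc 1 k, 0 < th j)
    (hgth : ∀ j ∈ Finset.Icc 1 k, 0 < gth j)
    (hcond : ∀ j ∈ Finset.Icc 1 k, gth j * th j < lamq ^ 2 * a j) :
    1 - (Pm {ω | ∀ j ∈ Finset.Icc 1 k,
          gth j < lamq ^ 2 * (X ω) ^ 2 * rho * a j /
            ((X ω) ^ 2 * rho * th j
              + dsr ^ alpha * dk ^ alpha * (lamq ^ 2 + eps * rho * Y ω))}).toReal
      = ∫ z in Set.Ioi (0 : ℝ), Real.exp (-z) *
          F M (Real.sqrt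
            ((Finset.Icc 1 k).sup' (Finset.nonempty_Icc.mpr hk)
                (fun j => gth j / (rho * (lamq ^ 2 * a j - gth j * th j)))
              * (dsr ^ alpha * dk ^ alpha * (lamq ^ 2 + eps * rho * ΩI * z)))) := by
  have hFcont := F_continuous hM
  have hDpos : 0 < dsr ^ alpha * dk ^ alpha :=
    mul_pos (Real.rpow_pos_of_pos hdsr _) (Real.rpow_pos_of_pos hdk _)
  -- the function appearing inside F on the right-hand side, composed with ΩI • ·
  set g : ℝ → ℝ := fun z => Real.sqrt
      ((Finset.Icc 1 k).sup' (Finset.nonempty_Icc.mpr hk)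
          (fun j => gth j / (rho * (lamq ^ 2 * a j - gth j * th j)))
        * (dsr ^ alpha * dk ^ alpha * (lamq ^ 2 + eps * rho * ΩI * z))) with hgdef
  have hgcont : Continuous g := by
    apply Real.continuous_sqrt.comp
    continuity
  -- rewrite the event
  have hAeq : {ω | ∀ j ∈ Finset.Icc 1 k,
        gth j < lamq ^ 2 * (X ω) ^ 2 * rho * a j /
          ((X ω) ^ 2 * rho * th j
            + dsr ^ alpha * dk ^ alpha * (lamq ^ 2 + eps * rho * Y ω))}
      = {ω | g (Y ω / ΩI) < X ω} := by
    ext ω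
    have := key_iff k hk lamq rho eps (dsr ^ alpha * dk ^ alpha) a th gth
      hlam0 hrho heps0 hDpos hth hgth hcond (X ω) (Y ω) (hXnn ω) (hYnn ω)
    simp only [Set.mem_setOf_eq, this, hgdef]
    have : eps * rho * ΩI * (Y ω / ΩI) = eps * rho * Y ω := by
      field_simp
    rw [this]
  rw [hAeq]
  -- the core set
  set W : Ω → ℝ := fun ω => Y ω / ΩI with hWdef
  have hWm : Measurable W := hYm.div_const ΩI
  have hWnn : ∀ ω, 0 ≤ W ω := fun ω => div_nonneg (hYnn ω) hΩI.le
  have hAm : MeasurableSet {ω | g (W ω) < X ω} :=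
    measurableSet_lt (hgcont.measurable.comp hWm) hXm
  -- complement probability
  have hcompl : (1:ℝ) - (Pm {ω | g (W ω) < X ω}).toReal
      = (Pm {ω | X ω ≤ g (W ω)}).toReal := by
    have h1 : {ω | X ω ≤ g (W ω)} = {ω | g (W ω) < X ω}ᶜ := by
      ext ω; simp [not_lt]
    rw [h1, prob_compl_eq_one_sub hAm, ENNReal.toReal_sub_of_le prob_le_one ENNReal.one_ne_top,
      ENNReal.toReal_one]
  rw [hcompl]
  -- laws
  set μX : Measure ℝ := Pm.map X with hμX
  set μW : Measure ℝ := Pm.map W with hμW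
  haveI : IsProbabilityMeasure μX := Measure.isProbabilityMeasure_map hXm.aemeasurable
  haveI : IsProbabilityMeasure μW := Measure.isProbabilityMeasure_map hWm.aemeasurable
  have hindepW : IndepFun X W Pm := by
    have := hindep.comp measurable_id (measurable_id.div_const ΩI)
    exact this
  have hjoint : Pm.map (fun ω => (X ω, W ω)) = μX.prod μW :=
    (indepFun_iff_map_prod_eq_prod_map_map hXm.aemeasurable hWm.aemeasurable).mp hindepW
  have hSm : MeasurableSet {p : ℝ × ℝ | p.1 ≤ g p.2} :=
    measurableSet_le measurable_fst (hgcont.measurable.comp measurable_snd)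
  have hXlaw : ∀ t : ℝ, 0 ≤ t → μX (Set.Iic t) = ENNReal.ofReal (F M t) := by
    intro t ht
    rw [hμX, Measure.map_apply hXm measurableSet_Iic]
    have h1 : X ⁻¹' Set.Iic t = {ω | X ω ≤ t} := rfl
    rw [h1, ← hXcdf t ht, ENNReal.ofReal_toReal (measure_ne_top _ _)]
  -- express the probability as an integral against the law of W
  have hprob : Pm {ω | X ω ≤ g (W ω)}
      = ∫⁻ w, ENNReal.ofReal (F M (g w)) ∂μW := by
    have h1 : {ω | X ω ≤ g (W ω)} = (fun ω => (X ω, W ω)) ⁻¹' {p : ℝ × ℝ | p.1 ≤ g p.2} := rfl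
    rw [h1, ← Measure.map_apply (hXm.prodMk hWm) hSm, hjoint,
      Measure.prod_apply_symm hSm]
    congr 1
    ext w
    have h2 : (fun x => (x, w)) ⁻¹' {p : ℝ × ℝ | p.1 ≤ g p.2} = Set.Iic (g w) := rfl
    rw [h2, hXlaw (g w) (Real.sqrt_nonneg _)]
  -- identify the law of W as the standard exponential distribution
  set ν : Measure ℝ := volume.withDensity
      (fun z => Set.indicator (Set.Ioi 0) (fun z => ENNReal.ofReal (Real.exp (-z))) z) with hν
  have hdm : Measurable (fun z : ℝ =>
      Set.indicator (Set.Ioi 0) (fun z => ENNReal.ofReal (Real.exp (-z))) z) :=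
    Measurable.indicator
      (ENNReal.measurable_ofReal.comp (Real.continuous_exp.comp continuous_neg).measurable)
      measurableSet_Ioi
  have hνIic : ∀ t : ℝ, ν (Set.Iic t) = ENNReal.ofReal (1 - Real.exp (-t)) := by
    intro t
    rw [hν, withDensity_apply _ measurableSet_Iic]
    rw [lintegral_indicator measurableSet_Ioi, Measure.restrict_restrict measurableSet_Ioi,
      Set.Ioi_inter_Iic]
    rcases le_or_gt t 0 with ht | ht
    · rw [Set.Ioc_eq_empty (by simpa using ht), Measure.restrict_empty, lintegral_zero_measure]
      have : 1 - Real.exp (-t) ≤ 0 := by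
        have := Real.one_le_exp (by linarith : (0:ℝ) ≤ -t)
        linarith
      rw [ENNReal.ofReal_eq_zero.mpr this]
    · rw [← ofReal_integral_eq_lintegral_ofReal
        (Continuous.integrableOn_Ioc (by fun_prop : Continuous fun z : ℝ => Real.exp (-z)))
        (Filter.Eventually.of_forall fun z => (Real.exp_pos _).le)]
      congr 1
      rw [← intervalIntegral.integral_of_le ht.le]
      have : ∀ x ∈ Set.uIcc 0 t, Real.exp (-x) = Real.exp (-x) := fun _ _ => rfl
      rw [intervalIntegral.integral_comp_neg (fun x => Real.exp x)]
      rw [integral_exp]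
      simp
  have hWIic : ∀ t : ℝ, μW (Set.Iic t) = ENNReal.ofReal (1 - Real.exp (-t)) := by
    intro t
    rw [hμW, Measure.map_apply hWm measurableSet_Iic]
    rcases le_or_gt 0 t with ht | ht
    · have h1 : W ⁻¹' Set.Iic t = {ω | Y ω ≤ t * ΩI} := by
        ext ω
        simp only [Set.mem_preimage, Set.mem_Iic, Set.mem_setOf_eq, hWdef]
        exact div_le_iff₀ hΩI
      rw [h1, ← ENNReal.ofReal_toReal (measure_ne_top Pm _), hYcdf (t * ΩI)
        (mul_nonneg ht hΩI.le)]
      congr 2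
      rw [mul_div_assoc, div_self hΩI.ne', mul_one]
    · have h1 : W ⁻¹' Set.Iic t = ∅ := by
        ext ω
        simp only [Set.mem_preimage, Set.mem_Iic, Set.mem_empty_iff_false, iff_false, not_le]
        exact lt_of_lt_of_le ht (hWnn ω)
      rw [h1, measure_empty]
      have : 1 - Real.exp (-t) ≤ 0 := by
        have := Real.one_le_exp (by linarith : (0:ℝ) ≤ -t)
        linarith
      rw [ENNReal.ofReal_eq_zero.mpr this]
  have hμWeq : μW = ν := by
    refine Measure.ext_of_Iic μW ν fun t => ?_
    rw [hWIic t, hνIic t]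
  -- compute the integral
  have hFg_m : Measurable (fun w : ℝ => ENNReal.ofReal (F M (g w))) :=
    ENNReal.measurable_ofReal.comp (hFcont.comp hgcont).measurable
  have hlin : ∫⁻ w, ENNReal.ofReal (F M (g w)) ∂μW
      = ∫⁻ z in Set.Ioi (0:ℝ), ENNReal.ofReal (Real.exp (-z)) * ENNReal.ofReal (F M (g z)) := by
    rw [hμWeq, hν, lintegral_withDensity_eq_lintegral_mul _ hdm hFg_m]
    rw [← lintegral_indicator measurableSet_Ioi]
    congr 1
    ext z
    by_cases hz : z ∈ Set.Ioi (0:ℝ) <;>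
      simp [Set.indicator_of_mem, Set.indicator_of_notMem, hz]
  -- relate to the Bochner integral on the RHS
  have hRHS : ∫ z in Set.Ioi (0 : ℝ), Real.exp (-z) * F M (g z)
      = (∫⁻ z in Set.Ioi (0:ℝ),
          ENNReal.ofReal (Real.exp (-z)) * ENNReal.ofReal (F M (g z))).toReal := by
    rw [integral_eq_lintegral_of_nonneg_ae
      (Filter.Eventually.of_forall fun z =>
        mul_nonneg (Real.exp_pos _).le (F_nonneg hM (Real.sqrt_nonneg _)))
      ((Real.continuous_exp.comp continuous_neg).mul
        (hFcont.comp hgcont)).aestronglyMeasurable]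
    congr 1
    apply lintegral_congr
    intro z
    rw [ENNReal.ofReal_mul (Real.exp_pos _).le]
  rw [hprob, hlin]
  rw [show (fun z => Real.exp (-z) * F M (g z)) = fun z => Real.exp (-z) *
      F M (Real.sqrt
        ((Finset.Icc 1 k).sup' (Finset.nonempty_Icc.mpr hk)
            (fun j => gth j / (rho * (lamq ^ 2 * a j - gth j * th j)))
          * (dsr ^ alpha * dk ^ alpha * (lamq ^ 2 + eps * rho * ΩI * z)))) from rfl] at hRHS
  rw [hRHS]
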